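/- Let L be a lattice and let Θ be a congruence of L. Define Θ̂ on the lattice M̂(L) of Boolean triples by: Θ̂((x₀,y₀,z₀),(x₁,y₁,z₁)) iff Θ(x₀,x₁), Θ(y₀,y₁), and Θ(z₀,z₁). Then Θ̂ is a congruence of M̂(L): it is an equivalence relation compatible with the componentwise meet and with the join of M̂(L) (the Boolean closure of the componentwise join). -/
import Mathlib


/-- A triple `(x, y, z)` in a lattice is *Boolean* if
`x = (x ⊔ y) ⊓ (x ⊔ z)`, `y = (y ⊔ x) ⊓ (y ⊔ z)`, `z = (z ⊔ x) ⊓ (z ⊔ y)`. -/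
def IsBoolean {L : Type*} [Lattice L] (t : L × L × L) : Prop :=
  t.1 = (t.1 ⊔ t.2.1) ⊓ (t.1 ⊔ t.2.2) ∧
  t.2.1 = (t.2.1 ⊔ t.1) ⊓ (t.2.1 ⊔ t.2.2) ∧
  t.2.2 = (t.2.2 ⊔ t.1) ⊓ (t.2.2 ⊔ t.2.1)

/-- The Boolean closure of a triple. -/
def bClosure {L : Type*} [Lattice L] (t : L × L × L) : L × L × L :=
  ((t.1 ⊔ t.2.1) ⊓ (t.1 ⊔ t.2.2),
   (t.2.1 ⊔ t.1) ⊓ (t.2.1 ⊔ t.2.2),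
   (t.2.2 ⊔ t.1) ⊓ (t.2.2 ⊔ t.2.1))

variable {L : Type*} [Lattice L]

theorem isBoolean_of_rep (u v w : L) :
    IsBoolean ((u ⊓ v, u ⊓ w, v ⊓ w) : L × L × L) := by
  refine ⟨le_antisymm (le_inf le_sup_left le_sup_left) ?_,
          le_antisymm (le_inf le_sup_left le_sup_left) ?_,
          le_antisymm (le_inf le_sup_left le_sup_left) ?_⟩
  · exact inf_le_inf (sup_le inf_le_left inf_le_left) (sup_le inf_le_right inf_le_left)
  · exact inf_le_inf (sup_le inf_le_left inf_le_left) (sup_le inf_le_right inf_le_right)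
  · exact inf_le_inf (sup_le inf_le_left inf_le_right) (sup_le inf_le_right inf_le_right)

theorem isBoolean_iff_rep (t : L × L × L) :
    IsBoolean t ↔ ∃ u v w : L, t.1 = u ⊓ v ∧ t.2.1 = u ⊓ w ∧ t.2.2 = v ⊓ w := by
  constructor
  · rintro ⟨h1, h2, h3⟩
    refine ⟨t.1 ⊔ t.2.1, t.1 ⊔ t.2.2, t.2.1 ⊔ t.2.2, h1, ?_, ?_⟩
    · conv_lhs => rw [h2]
      rw [sup_comm t.2.1 t.1]
    · conv_lhs => rw [h3]
      rw [sup_comm t.2.2 t.1, sup_comm t.2.2 t.2.1]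
  · rintro ⟨u, v, w, h1, h2, h3⟩
    obtain ⟨a, b, c⟩ := t
    simp only at h1 h2 h3
    subst h1 h2 h3
    exact isBoolean_of_rep u v w

theorem bClosure_isBoolean (t : L × L × L) : IsBoolean (bClosure t) := by
  rw [isBoolean_iff_rep]
  refine ⟨t.1 ⊔ t.2.1, t.1 ⊔ t.2.2, t.2.1 ⊔ t.2.2, rfl, ?_, ?_⟩
  · show (t.2.1 ⊔ t.1) ⊓ (t.2.1 ⊔ t.2.2) = _
    rw [sup_comm t.2.1 t.1]
  · show (t.2.2 ⊔ t.1) ⊓ (t.2.2 ⊔ t.2.1) = _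
    rw [sup_comm t.2.2 t.1, sup_comm t.2.2 t.2.1]

theorem IsBoolean.inf {a b : L × L × L} (ha : IsBoolean a) (hb : IsBoolean b) :
    IsBoolean (a ⊓ b) := by
  rw [isBoolean_iff_rep] at ha hb ⊢
  obtain ⟨u, v, w, h1, h2, h3⟩ := ha
  obtain ⟨u', v', w', h1', h2', h3'⟩ := hb
  refine ⟨u ⊓ u', v ⊓ v', w ⊓ w', ?_, ?_, ?_⟩
  · show a.1 ⊓ b.1 = _
    rw [h1, h1', inf_inf_inf_comm]
  · show a.2.1 ⊓ b.2.1 = _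
    rw [h2, h2', inf_inf_inf_comm]
  · show a.2.2 ⊓ b.2.2 = _
    rw [h3, h3', inf_inf_inf_comm]

theorem le_bClosure (t : L × L × L) : t ≤ bClosure t :=
  ⟨le_inf le_sup_left le_sup_left, le_inf le_sup_left le_sup_left,
   le_inf le_sup_left le_sup_left⟩

theorem bClosure_le {t c : L × L × L} (hc : IsBoolean c) (h : t ≤ c) :
    bClosure t ≤ c := by
  obtain ⟨h1, h2, h3⟩ := h
  refine ⟨?_, ?_, ?_⟩
  · rw [hc.1]; exact inf_le_inf (sup_le_sup h1 h2) (sup_le_sup h1 h3)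
  · rw [hc.2.1]; exact inf_le_inf (sup_le_sup h2 h1) (sup_le_sup h2 h3)
  · rw [hc.2.2]; exact inf_le_inf (sup_le_sup h3 h1) (sup_le_sup h3 h2)

/-- The lattice `M̂(L)` of Boolean triples of `L`, ordered componentwise. -/
def BoolTriple (L : Type*) [Lattice L] := {t : L × L × L // IsBoolean t}

instance : PartialOrder (BoolTriple L) := Subtype.partialOrder _

instance : Lattice (BoolTriple L) where
  sup a b := ⟨bClosure (a.1 ⊔ b.1), bClosure_isBoolean _⟩
  le_sup_left a b := show a.1 ≤ bClosure (a.1 ⊔ b.1) from le_trans le_sup_left (le_bClosure _)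
  le_sup_right a b := show b.1 ≤ bClosure (a.1 ⊔ b.1) from le_trans le_sup_right (le_bClosure _)
  sup_le a b c hac hbc := show bClosure (a.1 ⊔ b.1) ≤ c.1 from bClosure_le c.2 (sup_le hac hbc)
  inf a b := ⟨a.1 ⊓ b.1, a.2.inf b.2⟩
  inf_le_left a b := show a.1 ⊓ b.1 ≤ a.1 from inf_le_left
  inf_le_right a b := show a.1 ⊓ b.1 ≤ b.1 from inf_le_right
  le_inf a b c hab hac := show a.1 ≤ b.1 ⊓ c.1 from le_inf hab hac

/-- A *congruence* of a lattice: an equivalence relation compatible with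
joins and meets. -/
def IsLatticeCongruence {α : Type*} [Lattice α] (Θ : α → α → Prop) : Prop :=
  Equivalence Θ ∧
    ∀ a b c d : α, Θ a b → Θ c d → Θ (a ⊔ c) (b ⊔ d) ∧ Θ (a ⊓ c) (b ⊓ d)

/-- If `Θ` is a congruence of `L`, then the componentwise relation `Θ̂` is a
congruence of the lattice `M̂(L)` of Boolean triples. -/
theorem isLatticeCongruence_hat {L : Type*} [Lattice L]
    (Θ : L → L → Prop) (hΘ : IsLatticeCongruence Θ) :
    IsLatticeCongruence
      (fun a b : BoolTriple L =>
        Θ a.1.1 b.1.1 ∧ Θ a.1.2.1 b.1.2.1 ∧ Θ a.1.2.2 b.1.2.2) := by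
  obtain ⟨⟨hrefl, hsymm, htrans⟩, hcomp⟩ := hΘ
  have hsup : ∀ a b c d : L, Θ a b → Θ c d → Θ (a ⊔ c) (b ⊔ d) :=
    fun a b c d h1 h2 => (hcomp a b c d h1 h2).1
  have hinf : ∀ a b c d : L, Θ a b → Θ c d → Θ (a ⊓ c) (b ⊓ d) :=
    fun a b c d h1 h2 => (hcomp a b c d h1 h2).2
  constructor
  · constructor
    · exact fun a => ⟨hrefl _, hrefl _, hrefl _⟩
    · exact fun h => ⟨hsymm h.1, hsymm h.2.1, hsymm h.2.2⟩
    · exact fun h1 h2 => ⟨htrans h1.1 h2.1, htrans h1.2.1 h2.2.1, htrans h1.2.2 h2.2.2⟩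
  · rintro a b c d ⟨h1, h2, h3⟩ ⟨h4, h5, h6⟩
    constructor
    · -- join: bClosure of componentwise sup
      have hx : Θ (a.1.1 ⊔ c.1.1) (b.1.1 ⊔ d.1.1) := hsup _ _ _ _ h1 h4
      have hy : Θ (a.1.2.1 ⊔ c.1.2.1) (b.1.2.1 ⊔ d.1.2.1) := hsup _ _ _ _ h2 h5
      have hz : Θ (a.1.2.2 ⊔ c.1.2.2) (b.1.2.2 ⊔ d.1.2.2) := hsup _ _ _ _ h3 h6
      exact ⟨hinf _ _ _ _ (hsup _ _ _ _ hx hy) (hsup _ _ _ _ hx hz),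
             hinf _ _ _ _ (hsup _ _ _ _ hy hx) (hsup _ _ _ _ hy hz),
             hinf _ _ _ _ (hsup _ _ _ _ hz hx) (hsup _ _ _ _ hz hy)⟩
    · exact ⟨hinf _ _ _ _ h1 h4, hinf _ _ _ _ h2 h5, hinf _ _ _ _ h3 h6⟩
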